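/- Let F be an arbitrary field, let A ⊆ {1,…,n}, and suppose the family {s_i^{(n)} : i ∈ A} separates S_n-orbits in F^n. Then for every m ≤ n, the family {s_j^{(m)} : j ∈ A, j ≤ m} separates S_m-orbits in F^m. -/
import Mathlib

/-- The value of the `k`-th elementary symmetric polynomial in `n` variables on a
vector `v ∈ F^n` (it is `0` for `k > n` and `1` for `k = 0`). -/
def esymmVal {F : Type*} [CommSemiring F] (n k : ℕ) (v : Fin n → F) : F :=
  ∑ t ∈ Finset.powersetCard k (Finset.univ : Finset (Fin n)), ∏ i ∈ t, v i

/-- Two vectors `v, w ∈ F^n` lie in the same `S_n`-orbit. -/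
def SameOrbit {F : Type*} (n : ℕ) (v w : Fin n → F) : Prop :=
  ∃ π : Equiv.Perm (Fin n), ∀ i, w i = v (π i)

/-- The family `{s_i^{(n)} : i ∈ A}` separates the `S_n`-orbits in `F^n`. -/
def Separates (F : Type*) [CommSemiring F] (n : ℕ) (A : Set ℕ) : Prop :=
  ∀ v w : Fin n → F, ¬ SameOrbit n v w → ∃ i ∈ A, esymmVal n i v ≠ esymmVal n i w

lemma esymmVal_eq_esymm {F : Type*} [CommSemiring F] (n k : ℕ) (v : Fin n → F) :
    esymmVal n k v = (Multiset.map v Finset.univ.val).esymm k :=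
  (Finset.esymm_map_val v Finset.univ k).symm

/-- the multiset of values of a function on a fintype -/
noncomputable def mval {F : Type*} {α : Type*} [Fintype α] (v : α → F) : Multiset F :=
  Multiset.map v Finset.univ.val

lemma mval_comp_equiv {F : Type*} {α β : Type*} [Fintype α] [Fintype β]
    (v : α → F) (e : β ≃ α) : mval (v ∘ e) = mval v := by
  unfold mval
  conv_rhs => rw [← Finset.map_univ_equiv e, Finset.map_val, Multiset.map_map]
  rfl

lemma sameOrbit_iff_mval {F : Type*} (m : ℕ) (v w : Fin m → F) :
    SameOrbit m v w ↔ mval v = mval w := by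
  classical
  constructor
  · rintro ⟨π, hπ⟩
    have : w = v ∘ π := funext hπ
    rw [this, mval_comp_equiv]
  · intro h
    have hcard : ∀ b : F, Fintype.card {i // w i = b} = Fintype.card {i // v i = b} := by
      intro b
      have hv : Fintype.card {i // v i = b} = Multiset.count b (mval v) := by
        rw [mval, Multiset.count_map, Fintype.card_subtype, Finset.card_def, Finset.filter_val]
        congr 1
        exact Multiset.filter_congr (fun x _ => eq_comm)
      have hw : Fintype.card {i // w i = b} = Multiset.count b (mval w) := by
        rw [mval, Multiset.count_map, Fintype.card_subtype, Finset.card_def, Finset.filter_val]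
        congr 1
        exact Multiset.filter_congr (fun x _ => eq_comm)
      rw [hv, hw, h]
    have e : ∀ b : F, {i // w i = b} ≃ {i // v i = b} :=
      fun b => Fintype.equivOfCardEq (hcard b)
    refine ⟨((Equiv.sigmaFiberEquiv w).symm.trans
      ((Equiv.sigmaCongrRight e).trans (Equiv.sigmaFiberEquiv v))), fun i => ?_⟩
    exact ((e (w i)) ⟨i, rfl⟩).2.symm

/-- padding a vector with zeros -/
def pad {F : Type*} [Zero F] {m n : ℕ} (v : Fin m → F) : Fin n → F :=
  fun i => if h : (i : ℕ) < m then v ⟨i, h⟩ else 0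

lemma mval_pad {F : Type*} [Zero F] {m n : ℕ} (h : m ≤ n) (v : Fin m → F) :
    mval (pad v : Fin n → F) = mval v + Multiset.replicate (n - m) 0 := by
  have hmn : m + (n - m) = n := Nat.add_sub_cancel' h
  let e : Fin m ⊕ Fin (n - m) ≃ Fin n := finSumFinEquiv.trans (finCongr hmn)
  rw [← mval_comp_equiv (pad v) e]
  unfold mval
  rw [← Finset.univ_disjSum_univ, Finset.val_disjSum, Multiset.disjSum, Multiset.map_add,
    Multiset.map_map, Multiset.map_map]
  congr 1
  · apply Multiset.map_congr rfl
    intro i _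
    simp only [Function.comp_apply, e, pad, Equiv.trans_apply, finCongr_apply]
    have : ((Fin.cast hmn (finSumFinEquiv (Sum.inl i))) : ℕ) = (i : ℕ) := by simp
    rw [dif_pos (this ▸ i.isLt)]
    exact congrArg v (Fin.ext this)
  · refine Multiset.eq_replicate.mpr ⟨by simp, ?_⟩
    intro b hb
    obtain ⟨j, _, rfl⟩ := Multiset.mem_map.mp hb
    simp only [Function.comp_apply, e, pad, Equiv.trans_apply, finCongr_apply]
    have : ¬ ((Fin.cast hmn (finSumFinEquiv (Sum.inr j))) : ℕ) < m := by
      simp [Nat.not_lt, Nat.le_add_right]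
    rw [dif_neg this]

lemma esymm_cons_zero {F : Type*} [CommSemiring F] (s : Multiset F) (k : ℕ) (hk : 1 ≤ k) :
    ((0 : F) ::ₘ s).esymm k = s.esymm k := by
  obtain ⟨j, rfl⟩ := Nat.exists_eq_add_of_le hk
  rw [Multiset.esymm, Multiset.esymm, Nat.add_comm 1 j, Multiset.powersetCard_cons,
    Multiset.map_add, Multiset.sum_add, Multiset.map_map]
  have : ∀ t ∈ Multiset.powersetCard j s, ((Multiset.prod ∘ Multiset.cons 0) t : F) = 0 := by
    intro t _; simp
  rw [Multiset.map_congr rfl this]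
  simp

lemma esymm_add_replicate_zero {F : Type*} [CommSemiring F] (s : Multiset F) (z k : ℕ)
    (hk : 1 ≤ k) : (s + Multiset.replicate z (0 : F)).esymm k = s.esymm k := by
  induction z with
  | zero => simp
  | succ z ih =>
      rw [Multiset.replicate_succ, Multiset.add_cons, esymm_cons_zero _ _ hk, ih]

lemma esymmVal_eq_zero {F : Type*} [CommSemiring F] {m k : ℕ} (h : m < k) (v : Fin m → F) :
    esymmVal m k v = 0 := by
  rw [esymmVal, Finset.powersetCard_eq_empty.mpr (by simpa using h), Finset.sum_empty]

/-- If `{s_i^{(n)} : i ∈ A}` (for `A ⊆ {1, …, n}`) separates `S_n`-orbits in `F^n`,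
then for every `m ≤ n` the family `{s_j^{(m)} : j ∈ A, j ≤ m}` separates
`S_m`-orbits in `F^m`. -/
theorem stmt8 (F : Type*) [Field F] (n : ℕ) (A : Set ℕ) (hA : A ⊆ Set.Icc 1 n)
    (hsep : Separates F n A) :
    ∀ m : ℕ, m ≤ n → Separates F m {j | j ∈ A ∧ j ≤ m} := by
  intro m hmn v w hvw
  -- padded vectors are in different S_n orbits
  have hpad : ¬ SameOrbit n (pad v) (pad w) := by
    intro hs
    apply hvw
    rw [sameOrbit_iff_mval] at hs ⊢
    rw [mval_pad hmn, mval_pad hmn] at hs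
    exact add_right_cancel hs
  obtain ⟨i, hiA, hne⟩ := hsep _ _ hpad
  have hi1 : 1 ≤ i := (hA hiA).1
  -- esymmVal on the padded vector equals esymmVal on the original
  have key : ∀ u : Fin m → F, esymmVal n i (pad u) = esymmVal m i u := by
    intro u
    rw [esymmVal_eq_esymm, esymmVal_eq_esymm, ← mval, ← mval, mval_pad hmn,
      esymm_add_replicate_zero _ _ _ hi1]
  rw [key v, key w] at hne
  have him : i ≤ m := by
    by_contra him
    push_neg at him
    rw [esymmVal_eq_zero him, esymmVal_eq_zero him] at hne
    exact hne rfl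
  exact ⟨i, ⟨hiA, him⟩, hne⟩
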